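/- Let −1 ≤ k ≤ d. Let Δ be the simplicial complex on vertex set [2d−k+1] whose facets are: D₁ = [d−k] ∪ σ, D₂ = {d−k+1,…,2d−2k} ∪ σ where σ = {2d−2k+1,…,2d−k+1}, and all sets of the form W_{1,j} ∪ W_{2,i} where W_{1,j} = {j+1,…,j+d−k+1} for 0 ≤ j ≤ d−k−1 and W_{2,i} = σ∖{i} for i ∈ σ. Then the Boolean intervals I = [σ, D₁], I′ = [∅, D₂], and I_{i,j} = [{j+1} ∪ {v ∈ σ : v < i}, W_{1,j} ∪ W_{2,i}] (for i ∈ σ and 0 ≤ j ≤ d−k−1) cover every face of Δ, each face lying in exactly one of these intervals except the face σ, which lies in both I and I′. Consequently, the intervals I and I_{i,j} form a partitioning of the poset (Δ,⟨D₂⟩) ∪ {σ}, so Δ is a (d,k)-prepartition extender with specified facet D₂ and specified face σ. -/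
import Mathlib


/-- A simplicial complex on vertex set `ℕ`: a finite collection of finite sets of
vertices (faces) closed under taking subsets. -/
def IsComplex (Δ : Finset (Finset ℕ)) : Prop :=
  ∀ σ ∈ Δ, ∀ τ ⊆ σ, τ ∈ Δ

/-- `F` is a facet (maximal face) of `Δ`. -/
def IsFacet (Δ : Finset (Finset ℕ)) (F : Finset ℕ) : Prop :=
  F ∈ Δ ∧ ∀ G ∈ Δ, F ⊆ G → F = G

/-- `Δ` is a pure `d`-dimensional complex: it is nonempty and every facet has
cardinality `d + 1` (i.e. dimension `d`). -/
def PureDim (Δ : Finset (Finset ℕ)) (d : ℤ) : Prop :=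
  Δ.Nonempty ∧ ∀ F : Finset ℕ, IsFacet Δ F → (F.card : ℤ) = d + 1

/-- `S` is a partitioning of the set of faces `P` (ordered by inclusion) into Boolean
intervals topped by maximal elements of `P`.  Each pair `p ∈ S` represents the interval
`[p.1, p.2]`; the intervals must be full Boolean intervals contained in `P`
(second condition), their tops must be maximal elements of `P` (first condition),
and every element of `P` must lie in exactly one interval (third condition). -/
def IsPartitioning (S : Finset (Finset ℕ × Finset ℕ)) (P : Finset (Finset ℕ)) : Prop :=
  (∀ p ∈ S, p.1 ⊆ p.2 ∧ p.2 ∈ P ∧ ∀ c ∈ P, p.2 ⊆ c → p.2 = c) ∧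
  (∀ p ∈ S, ∀ e : Finset ℕ, p.1 ⊆ e → e ⊆ p.2 → e ∈ P) ∧
  (∀ e ∈ P, ∃! p : Finset ℕ × Finset ℕ, p ∈ S ∧ p.1 ⊆ e ∧ e ⊆ p.2)

/-- A set of faces, ordered by inclusion, is partitionable if it admits a partitioning
into Boolean intervals whose maximum elements are maximal elements. -/
def Partitionable (P : Finset (Finset ℕ)) : Prop :=
  ∃ S : Finset (Finset ℕ × Finset ℕ), IsPartitioning S P

/-- The relative complex `(Δ, ⟨F⟩)`: the faces of `Δ` not contained in `F`. -/
def relF (Δ : Finset (Finset ℕ)) (F : Finset ℕ) : Finset (Finset ℕ) :=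
  Δ.filter (fun τ => ¬ τ ⊆ F)

/-- The specified `k`-face `σ = {2d-2k+1, …, 2d-k+1}` of the canonical
`(d,k)`-prepartition extender. -/
def sigC (d k : ℤ) : Finset ℕ :=
  Finset.Icc ((2 * (d - k)).toNat + 1) ((2 * (d - k)).toNat + (k + 1).toNat)

/-- The facet `D₁ = [d-k] ∪ σ`. -/
def D1 (d k : ℤ) : Finset ℕ :=
  Finset.Icc 1 (d - k).toNat ∪ sigC d k

/-- The facet `D₂ = {d-k+1, …, 2d-2k} ∪ σ`. -/
def D2 (d k : ℤ) : Finset ℕ :=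
  Finset.Icc ((d - k).toNat + 1) (2 * (d - k)).toNat ∪ sigC d k

/-- `W_{1,j} = {j+1, …, j+d-k+1}`. -/
def W1 (d k : ℤ) (j : ℕ) : Finset ℕ :=
  Finset.Icc (j + 1) (j + (d - k).toNat + 1)

/-- `W_{2,i} = σ ∖ {i}`. -/
def W2 (d k : ℤ) (i : ℕ) : Finset ℕ :=
  (sigC d k).erase i

/-- The bottom element `{j+1} ∪ {v ∈ σ : v < i}` of the interval `I_{i,j}`. -/
def botIJ (d k : ℤ) (i j : ℕ) : Finset ℕ :=
  insert (j + 1) ((sigC d k).filter (· < i))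

/-- The canonical `(d,k)`-prepartition extender: the simplicial complex on the vertex
set `[2d-k+1]` whose facets are `D₁`, `D₂` and the sets `W_{1,j} ∪ W_{2,i}`. -/
def preExt (d k : ℤ) : Finset (Finset ℕ) :=
  (Finset.Icc 1 ((2 * (d - k)).toNat + (k + 1).toNat)).powerset.filter
    (fun τ => τ ⊆ D1 d k ∨ τ ⊆ D2 d k ∨
      ∃ j ∈ Finset.range (d - k).toNat, ∃ i ∈ sigC d k, τ ⊆ W1 d k j ∪ W2 d k i)

/-- The family of Boolean intervals `I_{i,j} = [{j+1} ∪ {v ∈ σ : v < i}, W_{1,j} ∪ W_{2,i}]`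
for `i ∈ σ` and `0 ≤ j ≤ d-k-1`, encoded as (bottom, top) pairs. -/
def preIJ (d k : ℤ) : Finset (Finset ℕ × Finset ℕ) :=
  ((Finset.range (d - k).toNat) ×ˢ sigC d k).image
    (fun p => (botIJ d k p.2 p.1, W1 d k p.1 ∪ W2 d k p.2))

/-- The intervals `I = [σ, D₁]` and `I_{i,j}`: they partition `(Δ,⟨D₂⟩) ∪ {σ}`. -/
def preIntervals (d k : ℤ) : Finset (Finset ℕ × Finset ℕ) :=
  insert (sigC d k, D1 d k) (preIJ d k)

/-- All the intervals `I = [σ, D₁]`, `I' = [∅, D₂]` and `I_{i,j}`. -/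
def allIntervals (d k : ℤ) : Finset (Finset ℕ × Finset ℕ) :=
  insert (∅, D2 d k) (preIntervals d k)


open Finset

/-! ### ℕ-world versions of the definitions -/

def sigN (m s : ℕ) : Finset ℕ := Finset.Icc (2*m+1) (2*m+s)

def D1N (m s : ℕ) : Finset ℕ := Finset.Icc 1 m ∪ sigN m s

def D2N (m s : ℕ) : Finset ℕ := Finset.Icc (m+1) (2*m) ∪ sigN m s

def W1N (m : ℕ) (j : ℕ) : Finset ℕ := Finset.Icc (j+1) (j+m+1)

def W2N (m s : ℕ) (i : ℕ) : Finset ℕ := (sigN m s).erase i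

def botN (m s : ℕ) (i j : ℕ) : Finset ℕ := insert (j+1) ((sigN m s).filter (· < i))

def preExtN (m s : ℕ) : Finset (Finset ℕ) :=
  (Finset.Icc 1 (2*m+s)).powerset.filter
    (fun τ => τ ⊆ D1N m s ∨ τ ⊆ D2N m s ∨
      ∃ j ∈ Finset.range m, ∃ i ∈ sigN m s, τ ⊆ W1N m j ∪ W2N m s i)

def preIJN (m s : ℕ) : Finset (Finset ℕ × Finset ℕ) :=
  ((Finset.range m) ×ˢ sigN m s).image
    (fun p => (botN m s p.2 p.1, W1N m p.1 ∪ W2N m s p.2))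

def preIntN (m s : ℕ) : Finset (Finset ℕ × Finset ℕ) :=
  insert (sigN m s, D1N m s) (preIJN m s)

def allIntN (m s : ℕ) : Finset (Finset ℕ × Finset ℕ) :=
  insert ((∅ : Finset ℕ), D2N m s) (preIntN m s)

def PN (m s : ℕ) : Finset (Finset ℕ) :=
  insert (sigN m s) ((preExtN m s).filter (fun τ => ¬ τ ⊆ D2N m s))

/-! ### Membership lemmas -/

variable {m s : ℕ}

lemma mem_sigN {x : ℕ} : x ∈ sigN m s ↔ 2*m+1 ≤ x ∧ x ≤ 2*m+s := by
  unfold sigN; simp only [Finset.mem_Icc]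

lemma mem_D1N {x : ℕ} : x ∈ D1N m s ↔ (1 ≤ x ∧ x ≤ m) ∨ (2*m+1 ≤ x ∧ x ≤ 2*m+s) := by
  unfold D1N sigN; simp only [Finset.mem_union, Finset.mem_Icc]

lemma mem_D2N {x : ℕ} : x ∈ D2N m s ↔ (m+1 ≤ x ∧ x ≤ 2*m) ∨ (2*m+1 ≤ x ∧ x ≤ 2*m+s) := by
  unfold D2N sigN; simp only [Finset.mem_union, Finset.mem_Icc]

lemma mem_topU {x i j : ℕ} : x ∈ W1N m j ∪ W2N m s i ↔
    (j+1 ≤ x ∧ x ≤ j+m+1) ∨ (x ≠ i ∧ (2*m+1 ≤ x ∧ x ≤ 2*m+s)) := by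
  unfold W1N W2N sigN
  simp only [Finset.mem_union, Finset.mem_Icc, Finset.mem_erase]

lemma mem_botN {x i j : ℕ} : x ∈ botN m s i j ↔
    x = j+1 ∨ ((2*m+1 ≤ x ∧ x ≤ 2*m+s) ∧ x < i) := by
  unfold botN sigN
  simp only [Finset.mem_insert, Finset.mem_filter, Finset.mem_Icc]

/-! ### Generators -/

def GenN (m s : ℕ) (G : Finset ℕ) : Prop :=
  G = D1N m s ∨ G = D2N m s ∨ ∃ j < m, ∃ i ∈ sigN m s, G = W1N m j ∪ W2N m s i

lemma gen_subset_Icc {G : Finset ℕ} (h : GenN m s G) : G ⊆ Finset.Icc 1 (2*m+s) := by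
  rcases h with rfl | rfl | ⟨j, hj, i, hi, rfl⟩ <;> intro x hx <;> rw [Finset.mem_Icc]
  · have := mem_D1N.mp hx; omega
  · have := mem_D2N.mp hx; omega
  · have := mem_topU.mp hx; omega

lemma mem_preExtN {τ : Finset ℕ} : τ ∈ preExtN m s ↔ ∃ G, GenN m s G ∧ τ ⊆ G := by
  unfold preExtN
  rw [Finset.mem_filter, Finset.mem_powerset]
  constructor
  · rintro ⟨-, h | h | ⟨j, hj, i, hi, h⟩⟩
    · exact ⟨_, Or.inl rfl, h⟩
    · exact ⟨_, Or.inr (Or.inl rfl), h⟩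
    · exact ⟨_, Or.inr (Or.inr ⟨j, Finset.mem_range.mp hj, i, hi, rfl⟩), h⟩
  · rintro ⟨G, hG, hτ⟩
    refine ⟨hτ.trans (gen_subset_Icc hG), ?_⟩
    rcases hG with h | h | ⟨j, hj, i, hi, h⟩
    · exact Or.inl (h ▸ hτ)
    · exact Or.inr (Or.inl (h ▸ hτ))
    · exact Or.inr (Or.inr ⟨j, Finset.mem_range.mpr hj, i, hi, h ▸ hτ⟩)

lemma card_sigN : (sigN m s).card = s := by
  unfold sigN; rw [Nat.card_Icc]; omega

lemma card_gen {G : Finset ℕ} (h : GenN m s G) : G.card = m + s := by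
  rcases h with rfl | rfl | ⟨j, hj, i, hi, rfl⟩
  · have hd : Disjoint (Finset.Icc 1 m) (sigN m s) := by
      rw [Finset.disjoint_left]
      intro a ha hb
      rw [Finset.mem_Icc] at ha; rw [mem_sigN] at hb; omega
    rw [D1N, Finset.card_union_of_disjoint hd, Nat.card_Icc, card_sigN]; omega
  · have hd : Disjoint (Finset.Icc (m+1) (2*m)) (sigN m s) := by
      rw [Finset.disjoint_left]
      intro a ha hb
      rw [Finset.mem_Icc] at ha; rw [mem_sigN] at hb; omega
    rw [D2N, Finset.card_union_of_disjoint hd, Nat.card_Icc, card_sigN]; omega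
  · have hi' := mem_sigN.mp hi
    have hd : Disjoint (W1N m j) (W2N m s i) := by
      rw [Finset.disjoint_left]
      intro a ha hb
      rw [W1N, Finset.mem_Icc] at ha
      have := mem_sigN.mp (Finset.erase_subset i (sigN m s) hb)
      omega
    rw [Finset.card_union_of_disjoint hd, W1N, Nat.card_Icc, W2N,
      Finset.card_erase_of_mem hi, card_sigN]
    omega

lemma gen_mem {G : Finset ℕ} (h : GenN m s G) : G ∈ preExtN m s :=
  mem_preExtN.mpr ⟨G, h, Finset.Subset.refl G⟩

lemma gen_maximal {G H : Finset ℕ} (hG : GenN m s G) (hH : H ∈ preExtN m s)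
    (hsub : G ⊆ H) : G = H := by
  obtain ⟨G', hG', hHG'⟩ := mem_preExtN.mp hH
  have h1 : H.card ≤ m + s := card_gen hG' ▸ Finset.card_le_card hHG'
  exact Finset.eq_of_subset_of_card_le hsub (by rw [card_gen hG]; exact h1)

lemma i_not_mem_topU {i j : ℕ} (hj : j < m) (hi : i ∈ sigN m s) :
    i ∉ W1N m j ∪ W2N m s i := by
  rw [mem_topU]
  have := mem_sigN.mp hi
  omega

lemma mem_preIJN {p : Finset ℕ × Finset ℕ} :
    p ∈ preIJN m s ↔ ∃ j < m, ∃ i ∈ sigN m s, p = (botN m s i j, W1N m j ∪ W2N m s i) := by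
  unfold preIJN
  simp only [Finset.mem_image, Finset.mem_product, Finset.mem_range, Prod.exists]
  constructor
  · rintro ⟨j, i, ⟨hj, hi⟩, rfl⟩; exact ⟨j, hj, i, hi, rfl⟩
  · rintro ⟨j, hj, i, hi, rfl⟩; exact ⟨j, i, ⟨hj, hi⟩, rfl⟩

lemma mem_allIntN {p : Finset ℕ × Finset ℕ} :
    p ∈ allIntN m s ↔ p = (∅, D2N m s) ∨ p = (sigN m s, D1N m s) ∨ p ∈ preIJN m s := by
  unfold allIntN preIntN
  simp only [Finset.mem_insert]

lemma mem_preIntN {p : Finset ℕ × Finset ℕ} :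
    p ∈ preIntN m s ↔ p = (sigN m s, D1N m s) ∨ p ∈ preIJN m s := by
  unfold preIntN
  simp only [Finset.mem_insert]

lemma botN_subset_topU {i j : ℕ} : botN m s i j ⊆ W1N m j ∪ W2N m s i := by
  intro x hx
  rw [mem_botN] at hx; rw [mem_topU]; omega

lemma sigN_not_IJ {p : Finset ℕ × Finset ℕ} (hp : p ∈ preIJN m s) :
    ¬ (p.1 ⊆ sigN m s ∧ sigN m s ⊆ p.2) := by
  obtain ⟨j, hj, i, hi, rfl⟩ := mem_preIJN.mp hp
  rintro ⟨-, h2⟩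
  exact i_not_mem_topU hj hi (h2 hi)

/-! ### The master covering/uniqueness lemma -/

lemma exists_interval {τ : Finset ℕ} (hτ : τ ∈ preExtN m s) :
    ∃ p ∈ allIntN m s, p.1 ⊆ τ ∧ τ ⊆ p.2 ∧
      (τ ≠ sigN m s → ∀ q ∈ allIntN m s, q.1 ⊆ τ → τ ⊆ q.2 → q = p) := by
  by_cases hD2 : τ ⊆ D2N m s
  · refine ⟨(∅, D2N m s), mem_allIntN.mpr (Or.inl rfl), Finset.empty_subset τ, hD2, ?_⟩
    intro hne q hq hq1 hq2
    rcases mem_allIntN.mp hq with rfl | rfl | hq'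
    · rfl
    · exfalso
      apply hne
      apply Finset.Subset.antisymm ?_ hq1
      intro x hx
      have h1 := mem_D1N.mp (hq2 hx)
      have h2 := mem_D2N.mp (hD2 hx)
      rw [mem_sigN]; omega
    · obtain ⟨j, hj, i, hi, rfl⟩ := mem_preIJN.mp hq'
      exfalso
      have h1 : j+1 ∈ τ := hq1 (mem_botN.mpr (Or.inl rfl))
      have h2 := mem_D2N.mp (hD2 h1)
      omega
  · obtain ⟨G, hG, hτG⟩ := mem_preExtN.mp hτ
    have hIcc : ∀ x ∈ τ, 1 ≤ x ∧ x ≤ 2*m+s := fun x hx =>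
      Finset.mem_Icc.mp (gen_subset_Icc hG (hτG hx))
    obtain ⟨w, hwτ, hwD2⟩ := Finset.not_subset.mp hD2
    rw [mem_D2N] at hwD2
    have hw : 1 ≤ w ∧ w ≤ m := by have := hIcc w hwτ; omega
    have hne' : τ.Nonempty := ⟨w, hwτ⟩
    by_cases hσ : sigN m s ⊆ τ
    · -- Case B : the interval [σ, D1]
      have hτD1 : τ ⊆ D1N m s := by
        rcases hG with rfl | rfl | ⟨j, hj, i, hi, rfl⟩
        · exact hτG
        · exact absurd hτG hD2
        · exact absurd (hτG (hσ hi)) (i_not_mem_topU hj hi)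
      refine ⟨(sigN m s, D1N m s), mem_allIntN.mpr (Or.inr (Or.inl rfl)), hσ, hτD1, ?_⟩
      intro _ q hq hq1 hq2
      rcases mem_allIntN.mp hq with rfl | rfl | hq'
      · exact absurd hq2 hD2
      · rfl
      · obtain ⟨j, hj, i, hi, rfl⟩ := mem_preIJN.mp hq'
        exact absurd (hq2 (hσ hi)) (i_not_mem_topU hj hi)
    · -- Case C : an interval I_{i,j}
      obtain ⟨a, haτ, hale⟩ : ∃ a ∈ τ, ∀ x ∈ τ, a ≤ x :=
        ⟨τ.min' hne', τ.min'_mem hne', fun x hx => τ.min'_le x hx⟩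
      have ham : 1 ≤ a ∧ a ≤ m := by
        have h1 := hale w hwτ
        have h2 := hIcc a haτ
        omega
      have hsd : (sigN m s \ τ).Nonempty := Finset.sdiff_nonempty.mpr hσ
      obtain ⟨i, hisd, hile'⟩ : ∃ i ∈ sigN m s \ τ, ∀ v ∈ sigN m s \ τ, i ≤ v :=
        ⟨_, (sigN m s \ τ).min'_mem hsd, fun v hv => Finset.min'_le _ v hv⟩
      obtain ⟨hiσ, hiτ⟩ := Finset.mem_sdiff.mp hisd
      have hile : ∀ v ∈ sigN m s, v ∉ τ → i ≤ v := fun v hv hv2 =>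
        hile' v (Finset.mem_sdiff.mpr ⟨hv, hv2⟩)
      obtain ⟨j, hja⟩ : ∃ j, j + 1 = a := ⟨a - 1, by omega⟩
      have hjm : j < m := by omega
      have hbot : botN m s i j ⊆ τ := by
        intro x hx
        rcases mem_botN.mp hx with rfl | ⟨hx1, hx2⟩
        · rwa [hja]
        · by_contra hxτ
          have := hile x (mem_sigN.mpr hx1) hxτ
          omega
      have htop : τ ⊆ W1N m j ∪ W2N m s i := by
        intro x hx
        have hax := hale x hx
        rw [mem_topU]
        by_cases hxσ : x ∈ sigN m s
        · right
          have hxs := mem_sigN.mp hxσ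
          exact ⟨fun h => hiτ (h ▸ hx), hxs⟩
        · left
          rw [mem_sigN] at hxσ
          have hb := hIcc x hx
          rcases hG with rfl | rfl | ⟨j', hj', i', hi', rfl⟩
          · have := mem_D1N.mp (hτG hx); omega
          · exact absurd hτG hD2
          · have hx' := mem_topU.mp (hτG hx)
            have ha' := mem_topU.mp (hτG haτ)
            omega
      refine ⟨(botN m s i j, W1N m j ∪ W2N m s i),
        mem_allIntN.mpr (Or.inr (Or.inr (mem_preIJN.mpr ⟨j, hjm, i, hiσ, rfl⟩))),
        hbot, htop, ?_⟩
      intro _ q hq hq1 hq2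
      rcases mem_allIntN.mp hq with rfl | rfl | hq'
      · exact absurd hq2 hD2
      · exact absurd hq1 hσ
      · obtain ⟨j₂, hj₂, i₂, hi₂, rfl⟩ := mem_preIJN.mp hq'
        have h1 : j₂ + 1 ∈ τ := hq1 (mem_botN.mpr (Or.inl rfl))
        have h2 : j₂ + 1 ≤ a := by
          have := mem_topU.mp (hq2 haτ)
          omega
        have hja2 : j₂ + 1 = a := le_antisymm h2 (hale _ h1)
        have hii2 : i₂ ∉ τ := fun hc => i_not_mem_topU hj₂ hi₂ (hq2 hc)
        have hle1 : i ≤ i₂ := hile i₂ hi₂ hii2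
        have hle2 : ¬ i < i₂ := fun hlt =>
          hiτ (hq1 (mem_botN.mpr (Or.inr ⟨mem_sigN.mp hiσ, hlt⟩)))
        have e1 : i₂ = i := by omega
        have e2 : j₂ = j := by omega
        rw [e1, e2]

/-! ### Structural facts -/

lemma complexN : IsComplex (preExtN m s) := by
  intro σ hσ τ hτ
  obtain ⟨G, hG, h⟩ := mem_preExtN.mp hσ
  exact mem_preExtN.mpr ⟨G, hG, hτ.trans h⟩

lemma sigN_subset_D1N : sigN m s ⊆ D1N m s := Finset.subset_union_right

lemma sigN_subset_D2N : sigN m s ⊆ D2N m s := Finset.subset_union_right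

lemma sigN_mem : sigN m s ∈ preExtN m s :=
  mem_preExtN.mpr ⟨D1N m s, Or.inl rfl, sigN_subset_D1N⟩

lemma facetN {G : Finset ℕ} (hG : GenN m s G) : IsFacet (preExtN m s) G :=
  ⟨gen_mem hG, fun _ hH hsub => gen_maximal hG hH hsub⟩

lemma pure2 {F : Finset ℕ} (hF : IsFacet (preExtN m s) F) : F.card = m + s := by
  obtain ⟨G, hG, hsub⟩ := mem_preExtN.mp hF.1
  have h := hF.2 G (gen_mem hG) hsub
  rw [h, card_gen hG]

/-! ### The partitioning -/

lemma mem_PN {e : Finset ℕ} :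
    e ∈ PN m s ↔ e = sigN m s ∨ (e ∈ preExtN m s ∧ ¬ e ⊆ D2N m s) := by
  unfold PN
  simp only [Finset.mem_insert, Finset.mem_filter]

lemma mem_PN_preExtN {e : Finset ℕ} (he : e ∈ PN m s) : e ∈ preExtN m s := by
  rcases mem_PN.mp he with rfl | ⟨h, -⟩
  · exact sigN_mem
  · exact h

lemma part1 : ∀ p ∈ preIntN m s, p.1 ⊆ p.2 ∧ p.2 ∈ PN m s ∧
    ∀ c ∈ PN m s, p.2 ⊆ c → p.2 = c := by
  intro p hp
  rcases mem_preIntN.mp hp with rfl | hp'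
  · refine ⟨sigN_subset_D1N, ?_, ?_⟩
    · rw [mem_PN]
      by_cases hm : m = 0
      · left
        subst hm
        rw [D1N, Finset.Icc_eq_empty (by omega), Finset.empty_union]
      · right
        refine ⟨gen_mem (Or.inl rfl), fun h => ?_⟩
        have h1 : (1:ℕ) ∈ D1N m s := mem_D1N.mpr (Or.inl ⟨le_refl 1, by omega⟩)
        have := mem_D2N.mp (h h1)
        omega
    · intro c hc hsub
      exact gen_maximal (Or.inl rfl) (mem_PN_preExtN hc) hsub
  · obtain ⟨j, hj, i, hi, rfl⟩ := mem_preIJN.mp hp'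
    refine ⟨botN_subset_topU, ?_, ?_⟩
    · rw [mem_PN]
      right
      refine ⟨gen_mem (Or.inr (Or.inr ⟨j, hj, i, hi, rfl⟩)), fun h => ?_⟩
      have h1 : j+1 ∈ W1N m j ∪ W2N m s i := mem_topU.mpr (Or.inl (by omega))
      have := mem_D2N.mp (h h1)
      omega
    · intro c hc hsub
      exact gen_maximal (Or.inr (Or.inr ⟨j, hj, i, hi, rfl⟩)) (mem_PN_preExtN hc) hsub

lemma part2 : ∀ p ∈ preIntN m s, ∀ e : Finset ℕ, p.1 ⊆ e → e ⊆ p.2 → e ∈ PN m s := by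
  intro p hp e h1 h2
  rcases mem_preIntN.mp hp with rfl | hp'
  · rw [mem_PN]
    by_cases he : e ⊆ D2N m s
    · left
      apply Finset.Subset.antisymm ?_ h1
      intro x hx
      have hx1 := mem_D1N.mp (h2 hx)
      have hx2 := mem_D2N.mp (he hx)
      rw [mem_sigN]; omega
    · exact Or.inr ⟨mem_preExtN.mpr ⟨_, Or.inl rfl, h2⟩, he⟩
  · obtain ⟨j, hj, i, hi, rfl⟩ := mem_preIJN.mp hp'
    rw [mem_PN]
    right
    refine ⟨mem_preExtN.mpr ⟨_, Or.inr (Or.inr ⟨j, hj, i, hi, rfl⟩), h2⟩, fun hc => ?_⟩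
    have h3 : j+1 ∈ e := h1 (mem_botN.mpr (Or.inl rfl))
    have := mem_D2N.mp (hc h3)
    omega

lemma part3 : ∀ e ∈ PN m s, ∃! p : Finset ℕ × Finset ℕ,
    p ∈ preIntN m s ∧ p.1 ⊆ e ∧ e ⊆ p.2 := by
  intro e he
  rcases mem_PN.mp he with rfl | ⟨h1, h2⟩
  · refine ⟨(sigN m s, D1N m s),
      ⟨mem_preIntN.mpr (Or.inl rfl), Finset.Subset.refl _, sigN_subset_D1N⟩, ?_⟩
    rintro q ⟨hq, hq1, hq2⟩
    rcases mem_preIntN.mp hq with rfl | hq'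
    · rfl
    · exact absurd ⟨hq1, hq2⟩ (sigN_not_IJ hq')
  · have hne : e ≠ sigN m s := by
      rintro rfl
      exact h2 sigN_subset_D2N
    obtain ⟨p, hp, hp1, hp2, huniq⟩ := exists_interval h1
    have hpPre : p ∈ preIntN m s := by
      rcases mem_allIntN.mp hp with rfl | h | h
      · exact absurd hp2 h2
      · exact mem_preIntN.mpr (Or.inl h)
      · exact mem_preIntN.mpr (Or.inr h)
    refine ⟨p, ⟨hpPre, hp1, hp2⟩, ?_⟩
    rintro q ⟨hq, hq1, hq2⟩
    refine huniq hne q ?_ hq1 hq2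
    rcases mem_preIntN.mp hq with rfl | h
    · exact mem_allIntN.mpr (Or.inr (Or.inl rfl))
    · exact mem_allIntN.mpr (Or.inr (Or.inr h))

/-- The canonical construction is a `(d,k)`-prepartition extender: the intervals `I`, `I'`
and `I_{i,j}` cover every face of `Δ = preExt d k`, every face other than `σ` lies in
exactly one of them while `σ` lies in exactly `I` and `I'`; consequently `I` together with
the `I_{i,j}` form a partitioning of `(Δ,⟨D₂⟩) ∪ {σ}`, so `Δ` is a `(d,k)`-prepartition
extender with specified facet `D₂` and specified face `σ`. -/
theorem canonical_prepartition_extender (d k : ℤ) (hk : -1 ≤ k) (hkd : k ≤ d) :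
    -- `Δ` is a pure `d`-dimensional complex with facet `D₂` and `k`-face `σ ⊆ D₂`
    (IsComplex (preExt d k) ∧ PureDim (preExt d k) d ∧
      IsFacet (preExt d k) (D2 d k) ∧ sigC d k ⊆ D2 d k ∧
      ((sigC d k).card : ℤ) = k + 1) ∧
    -- the intervals `I`, `I'`, `I_{i,j}` cover every face of `Δ`
    (∀ τ ∈ preExt d k, ∃ p ∈ allIntervals d k, p.1 ⊆ τ ∧ τ ⊆ p.2) ∧
    -- `σ` lies in both `I` and `I'`, and in none of the `I_{i,j}`
    (sigC d k ⊆ D1 d k ∧ sigC d k ⊆ D2 d k ∧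
      ∀ p ∈ preIJ d k, ¬ (p.1 ⊆ sigC d k ∧ sigC d k ⊆ p.2)) ∧
    -- every face other than `σ` lies in exactly one of the intervals
    (∀ τ ∈ preExt d k, τ ≠ sigC d k →
      ∃! p : Finset ℕ × Finset ℕ, p ∈ allIntervals d k ∧ p.1 ⊆ τ ∧ τ ⊆ p.2) ∧
    -- consequently, `I` and the `I_{i,j}` partition `(Δ,⟨D₂⟩) ∪ {σ}`
    IsPartitioning (preIntervals d k) (insert (sigC d k) (relF (preExt d k) (D2 d k))) := by
  have h2 : (2*(d-k)).toNat = 2*((d-k).toNat) := by omega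
  have hσ : sigC d k = sigN (d-k).toNat (k+1).toNat := by
    unfold sigC sigN; rw [h2]
  have hD1 : D1 d k = D1N (d-k).toNat (k+1).toNat := by
    unfold D1 D1N; rw [hσ]
  have hD2 : D2 d k = D2N (d-k).toNat (k+1).toNat := by
    unfold D2 D2N; rw [h2, hσ]
  have hW1 : W1 d k = W1N (d-k).toNat := rfl
  have hW2 : W2 d k = W2N (d-k).toNat (k+1).toNat := by
    funext i; unfold W2 W2N; rw [hσ]
  have hbot : botIJ d k = botN (d-k).toNat (k+1).toNat := by
    funext i j; unfold botIJ botN; rw [hσ]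
  have hpre : preExt d k = preExtN (d-k).toNat (k+1).toNat := by
    unfold preExt preExtN
    rw [h2, hD1, hD2, hσ, hW1, hW2]
  have hIJ : preIJ d k = preIJN (d-k).toNat (k+1).toNat := by
    unfold preIJ preIJN
    rw [hσ, hbot, hW1, hW2]
  have hInt : preIntervals d k = preIntN (d-k).toNat (k+1).toNat := by
    unfold preIntervals preIntN; rw [hσ, hD1, hIJ]
  have hall : allIntervals d k = allIntN (d-k).toNat (k+1).toNat := by
    unfold allIntervals allIntN; rw [hD2, hInt]
  rw [hpre, hσ, hD1, hD2, hIJ, hInt, hall]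
  refine ⟨⟨complexN, ⟨⟨_, sigN_mem⟩, ?_⟩, facetN (Or.inr (Or.inl rfl)),
      sigN_subset_D2N, ?_⟩, ?_, ⟨sigN_subset_D1N, sigN_subset_D2N, fun p hp => sigN_not_IJ hp⟩,
      ?_, part1, part2, part3⟩
  · intro F hF
    have := pure2 hF
    omega
  · rw [card_sigN]; omega
  · intro τ hτ
    obtain ⟨p, hp, h1, h2, -⟩ := exists_interval hτ
    exact ⟨p, hp, h1, h2⟩
  · intro τ hτ hne
    obtain ⟨p, hp, h1, h2, hu⟩ := exists_interval hτ
    exact ⟨p, ⟨hp, h1, h2⟩, fun q hq => hu hne q hq.1 hq.2.1 hq.2.2⟩
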